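/- Let u : X̂ → ℝ be bounded and measurable, and assume that the fiberwise supremum (Mu)(x) := sup_{z ∈ π⁻¹(x)} u(z) is a measurable function on X. Then for every n ≥ 1 and every z ∈ X̂, ∫ u d(κ̂ⁿ z) ≤ ∫ Mu d(κⁿ (π z)); equivalently, sup_{z ∈ π⁻¹(x)} (κ̂ⁿ u)(z) ≤ (κⁿ (Mu))(x) for every x ∈ X, where κⁿ and κ̂ⁿ denote n-fold kernel composition. -/

import Mathlib

open MeasureTheory ProbabilityTheory

noncomputable section

/-- The `n`-fold composition of a kernel, as a measure-valued map:
`kernelIterMeasure q n z` is the law of the `n`-th step of the chain started at `z`. -/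
def kernelIterMeasure {Z : Type*} [MeasurableSpace Z] (q : Kernel Z Z) : ℕ → Z → Measure Z
  | 0 => fun z => Measure.dirac z
  | n + 1 => fun z => (kernelIterMeasure q n z).bind (fun w => q w)

lemma kernelIterMeasure_prob {Z : Type*} [MeasurableSpace Z] (q : Kernel Z Z)
    [IsMarkovKernel q] (n : ℕ) (z : Z) : IsProbabilityMeasure (kernelIterMeasure q n z) := by
  induction n generalizing z with
  | zero => exact Measure.dirac.isProbabilityMeasure
  | succ n ih =>
    constructor
    rw [kernelIterMeasure, Measure.bind_apply MeasurableSet.univ q.measurable.aemeasurable]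
    have : ∀ w : Z, q w Set.univ = 1 := fun w => measure_univ
    simp only [this]
    haveI := ih z
    simp

lemma kernelIterMeasure_map {Xh X : Type*} [MeasurableSpace Xh] [MeasurableSpace X]
    (π : Xh → X) (hπ_meas : Measurable π)
    (κh : Kernel Xh Xh) (κ : Kernel X X)
    (h_intertwine : ∀ z : Xh, (κh z).map π = κ (π z)) (n : ℕ) (z : Xh) :
    (kernelIterMeasure κh n z).map π = kernelIterMeasure κ n (π z) := by
  induction n generalizing z with
  | zero => simp [kernelIterMeasure, Measure.map_dirac' hπ_meas]
  | succ n ih =>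
    have hd : Measurable (fun y : Xh => Measure.dirac (π y)) :=
      Measure.measurable_dirac.comp hπ_meas
    have hd' : Measurable (fun y : X => Measure.dirac y) := Measure.measurable_dirac
    simp only [kernelIterMeasure]
    rw [← Measure.bind_dirac_eq_map _ hπ_meas,
      Measure.bind_bind κh.measurable.aemeasurable hd.aemeasurable]
    have h1 : ∀ w : Xh, (κh w).bind (fun y => Measure.dirac (π y)) = κ (π w) := by
      intro w
      rw [Measure.bind_dirac_eq_map _ hπ_meas]
      exact h_intertwine w
    simp only [h1]
    rw [← ih z, ← Measure.bind_dirac_eq_map _ hπ_meas,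
      Measure.bind_bind hd.aemeasurable κ.measurable.aemeasurable]
    congr 1
    funext w
    exact (Measure.dirac_bind κ.measurable (π w)).symm

/-- Domination of iterated fiber operators: for bounded measurable `u`,
`∫ u d(κ̂ⁿ z) ≤ ∫ Mu d(κⁿ (π z))`, where `Mu` is the fiberwise supremum of `u`. -/
theorem iterated_domination
    {Xh X : Type*} [MeasurableSpace Xh] [MeasurableSpace X]
    (π : Xh → X) (hπ_meas : Measurable π) (hπ_surj : Function.Surjective π)
    (κh : Kernel Xh Xh) [IsMarkovKernel κh]
    (κ : Kernel X X) [IsMarkovKernel κ]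
    (h_intertwine : ∀ z : Xh, (κh z).map π = κ (π z))
    (u : Xh → ℝ) (hu_meas : Measurable u)
    (C : ℝ) (hu_bdd : ∀ z, |u z| ≤ C)
    (Mu : X → ℝ) (hMu : ∀ x, Mu x = sSup (u '' (π ⁻¹' {x})))
    (hMu_meas : Measurable Mu) :
    ∀ n : ℕ, 1 ≤ n →
      (∀ z : Xh,
        ∫ w, u w ∂(kernelIterMeasure κh n z) ≤ ∫ y, Mu y ∂(kernelIterMeasure κ n (π z))) ∧
      (∀ x : X,
        sSup ((fun z => ∫ w, u w ∂(kernelIterMeasure κh n z)) '' (π ⁻¹' {x}))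
          ≤ ∫ y, Mu y ∂(kernelIterMeasure κ n x)) := by
  have hbdd : ∀ x : X, BddAbove (u '' (π ⁻¹' {x})) :=
    fun x => ⟨C, fun r ⟨z, _, hz⟩ => hz ▸ (abs_le.mp (hu_bdd z)).2⟩
  have hu_le : ∀ z : Xh, u z ≤ Mu (π z) := by
    intro z
    rw [hMu]
    exact le_csSup (hbdd (π z)) ⟨z, rfl, rfl⟩
  have hMu_bdd : ∀ x : X, |Mu x| ≤ C := by
    intro x
    obtain ⟨z, hz⟩ := hπ_surj x
    rw [abs_le, hMu]
    constructor
    · calc -C ≤ u z := (abs_le.mp (hu_bdd z)).1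
        _ ≤ sSup (u '' (π ⁻¹' {x})) := le_csSup (hbdd x) ⟨z, hz, rfl⟩
    · exact csSup_le ⟨u z, z, hz, rfl⟩ (fun r ⟨w, _, hw⟩ => hw ▸ (abs_le.mp (hu_bdd w)).2)
  have key : ∀ n : ℕ, ∀ z : Xh,
      ∫ w, u w ∂(kernelIterMeasure κh n z) ≤ ∫ y, Mu y ∂(kernelIterMeasure κ n (π z)) := by
    intro n z
    haveI := kernelIterMeasure_prob κh n z
    have hint_u : Integrable u (kernelIterMeasure κh n z) :=
      Integrable.mono' (integrable_const C) hu_meas.aestronglyMeasurable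
        (Filter.Eventually.of_forall fun w => (Real.norm_eq_abs _).symm ▸ hu_bdd w)
    have hint_Mu : Integrable (fun w => Mu (π w)) (kernelIterMeasure κh n z) :=
      Integrable.mono' (integrable_const C) (hMu_meas.comp hπ_meas).aestronglyMeasurable
        (Filter.Eventually.of_forall fun w => (Real.norm_eq_abs _).symm ▸ hMu_bdd (π w))
    calc ∫ w, u w ∂(kernelIterMeasure κh n z)
        ≤ ∫ w, Mu (π w) ∂(kernelIterMeasure κh n z) :=
          integral_mono hint_u hint_Mu hu_le
      _ = ∫ y, Mu y ∂((kernelIterMeasure κh n z).map π) :=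
          (integral_map hπ_meas.aemeasurable hMu_meas.aestronglyMeasurable).symm
      _ = ∫ y, Mu y ∂(kernelIterMeasure κ n (π z)) := by
          rw [kernelIterMeasure_map π hπ_meas κh κ h_intertwine]
  intro n _
  refine ⟨key n, fun x => ?_⟩
  obtain ⟨z, hz⟩ := hπ_surj x
  refine csSup_le ⟨_, z, hz, rfl⟩ ?_
  rintro r ⟨w, hw, rfl⟩
  have := key n w
  rwa [show π w = x from hw] at this

end
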